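/- (Odd-definiteness of the static Skyrme model.) Let 𝕃 be a real symmetric positive semidefinite 3×3 matrix, let T be its Skyrme stress tensor, and let W ∈ ℝ³ be a unit vector such that 𝕃·Y = 0 for every vector Y ∈ ℝ³ orthogonal to W. Then WᵀT W ≥ 0, with equality if and only if 𝕃 = 0. -/

import Mathlib

open Matrix

/-- The Skyrme stress tensor of a real 3×3 matrix `L`:
`T = L - ½(tr L)·I - ½(L·L - ¼ tr(L·L)·I - (tr L)·L + ¼ (tr L)²·I)`. -/
noncomputable def skyrmeStress (L : Matrix (Fin 3) (Fin 3) ℝ) : Matrix (Fin 3) (Fin 3) ℝ :=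
  L - (L.trace / 2) • (1 : Matrix (Fin 3) (Fin 3) ℝ)
    - (1 / 2 : ℝ) • (L * L - ((L * L).trace / 4) • (1 : Matrix (Fin 3) (Fin 3) ℝ)
        - L.trace • L + (L.trace ^ 2 / 4) • (1 : Matrix (Fin 3) (Fin 3) ℝ))

theorem stmt5 (𝕃 : Matrix (Fin 3) (Fin 3) ℝ) (hsymm : 𝕃.IsSymm) (hpsd : 𝕃.PosSemidef)
    (W : Fin 3 → ℝ) (hW : W ⬝ᵥ W = 1)
    (hker : ∀ Y : Fin 3 → ℝ, Y ⬝ᵥ W = 0 → 𝕃.mulVec Y = 0) :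
    0 ≤ W ⬝ᵥ (skyrmeStress 𝕃).mulVec W ∧
      (W ⬝ᵥ (skyrmeStress 𝕃).mulVec W = 0 ↔ 𝕃 = 0) := by
  set l : ℝ := W ⬝ᵥ 𝕃.mulVec W with hl
  have hl0 : 0 ≤ l := by
    rw [hl]
    simpa only [star_trivial] using hpsd.dotProduct_mulVec_nonneg W
  -- 𝕃 W = l • W
  have hLW : 𝕃.mulVec W = l • W := by
    set v : Fin 3 → ℝ := 𝕃.mulVec W - l • W with hv
    have hvW : v ⬝ᵥ W = 0 := by
      simp [hv, sub_dotProduct, smul_dotProduct, hW, dotProduct_comm (𝕃.mulVec W) W, hl]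
    have hLv : 𝕃.mulVec v = 0 := hker v hvW
    have hvv : v ⬝ᵥ v = 0 := by
      have h0 : v ⬝ᵥ (l • W) = 0 := by
        rw [dotProduct_smul, hvW, smul_zero]
      have h1 : v ⬝ᵥ v = v ⬝ᵥ 𝕃.mulVec W := by
        calc v ⬝ᵥ v = v ⬝ᵥ (𝕃.mulVec W - l • W) := rfl
          _ = v ⬝ᵥ 𝕃.mulVec W - v ⬝ᵥ (l • W) := by rw [dotProduct_sub]
          _ = v ⬝ᵥ 𝕃.mulVec W := by rw [h0, sub_zero]
      have h2 : v ⬝ᵥ 𝕃.mulVec W = 𝕃.mulVec v ⬝ᵥ W := by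
        rw [dotProduct_mulVec]
        congr 1
        rw [← hsymm, vecMul_transpose, hsymm]
      rw [h1, h2, hLv, zero_dotProduct]
    have hv0 : v = 0 := dotProduct_self_eq_zero.mp hvv
    rw [hv] at hv0
    exact sub_eq_zero.mp hv0
  have hW3 : W 0 * W 0 + W 1 * W 1 + W 2 * W 2 = 1 := by
    simpa [dotProduct, Fin.sum_univ_three] using hW
  -- entrywise: 𝕃 i j = l * W i * W j
  have hent : ∀ i j, 𝕃 i j = l * W i * W j := by
    intro i j
    have hY : (Pi.single j 1 - (W j) • W : Fin 3 → ℝ) ⬝ᵥ W = 0 := by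
      simp [dotProduct, Fin.sum_univ_three, Pi.single_apply]
      fin_cases j
      · simp
        linear_combination (-(W 0)) * hW3
      · simp
        linear_combination (-(W 1)) * hW3
      · simp
        linear_combination (-(W 2)) * hW3
    have h := hker _ hY
    rw [mulVec_sub, mulVec_smul, hLW, sub_eq_zero] at h
    have h2 := congrFun h i
    simp [mulVec_single, Pi.single_apply, mulVec, dotProduct] at h2 ⊢
    fin_cases j <;> simp at h2 ⊢ <;> linarith [h2]
  have htr : 𝕃.trace = l := by
    simp only [trace, diag_apply, Fin.sum_univ_three, hent]
    linear_combination l * hW3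
  have hLL : 𝕃 * 𝕃 = l • 𝕃 := by
    ext i j
    simp only [mul_apply, Fin.sum_univ_three, hent, Matrix.smul_apply, smul_eq_mul]
    linear_combination (l ^ 2 * W i * W j) * hW3
  have htr2 : (𝕃 * 𝕃).trace = l ^ 2 := by
    rw [hLL, trace_smul, htr, smul_eq_mul, sq]
  have hval : W ⬝ᵥ (skyrmeStress 𝕃).mulVec W = l / 2 := by
    rw [skyrmeStress, htr2, htr, hLL]
    simp only [sub_mulVec, add_mulVec, smul_mulVec, one_mulVec,
      dotProduct_sub, dotProduct_add, dotProduct_smul, hLW, dotProduct_smul, hW,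
      smul_eq_mul, hl.symm]
    ring
  refine ⟨by rw [hval]; linarith, ?_⟩
  rw [hval]
  constructor
  · intro h
    have hl0' : l = 0 := by linarith
    ext i j
    rw [hent i j, hl0']
    simp
  · intro h
    have : l = 0 := by simp [hl, h]
    rw [this]
    norm_num
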